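/- Let a, b > 0, δ ∈ {1,-1}, and real constants c1, c2. The function u(t,x) = c1 - t + 4δ√(x/b) + (a/(2b))·x·(c2 + (a/2)·t - log x) satisfies u_t + a·x²·u_xx + b·x³·(u_xx)² = 0 for x > 0. -/

import Mathlib

theorem stmt12 (a b δ c1 c2 : ℝ)
    (ha : 0 < a)
    (hb : 0 < b)
    (hδ : δ = 1 ∨ δ = -1)
    (u : ℝ → ℝ → ℝ)
    (hu : ∀ t x : ℝ, u t x = c1 - t + 4 * δ * Real.sqrt (x / b) + (a / (2 * b)) * x * (c2 + (a / 2) * t - Real.log x)) :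
    ∀ t x : ℝ, 0 < x →
      deriv (fun s => u s x) t
      + a * x ^ 2 * deriv (fun y => deriv (fun z => u t z) y) x
      + b * x ^ 3 * (deriv (fun y => deriv (fun z => u t z) y) x) ^ 2 = 0 := by
  intro t x hx
  have hTb : (0:ℝ) < Real.sqrt b := Real.sqrt_pos.mpr hb
  have hT2 : Real.sqrt b * Real.sqrt b = b := Real.mul_self_sqrt hb.le
  have hsqdiv : ∀ z : ℝ, Real.sqrt (z / b) = Real.sqrt z / Real.sqrt b := by
    intro z
    rcases le_or_gt 0 z with hz | hz
    · exact Real.sqrt_div hz b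
    · rw [Real.sqrt_eq_zero_of_nonpos hz.le,
        Real.sqrt_eq_zero_of_nonpos (div_nonpos_iff.mpr (Or.inr ⟨hz.le, hb.le⟩)), zero_div]
  -- time derivative
  have h1 : deriv (fun s => u s x) t = -1 + (a / (2 * b)) * x * (a / 2) := by
    have heq : (fun s => u s x)
        = fun s => c1 - s + 4 * δ * Real.sqrt (x / b)
            + (a / (2 * b)) * x * (c2 + (a / 2) * s - Real.log x) := by
      funext s; exact hu s x
    rw [heq]
    have h0 : HasDerivAt (fun s : ℝ => c1 - s + 4 * δ * Real.sqrt (x / b)) (-1) t := by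
      exact (((hasDerivAt_const t c1).sub (hasDerivAt_id t)).add
        (hasDerivAt_const t (4 * δ * Real.sqrt (x / b)))).congr_deriv (by ring)
    have h2 : HasDerivAt (fun s : ℝ => (a / (2 * b)) * x * (c2 + (a / 2) * s - Real.log x))
        ((a / (2 * b)) * x * (a / 2)) t := by
      have : HasDerivAt (fun s : ℝ => c2 + (a / 2) * s - Real.log x) (a / 2) t := by
        exact (((hasDerivAt_const t c2).add
          ((hasDerivAt_id t).const_mul (a / 2))).sub (hasDerivAt_const t (Real.log x))).congr_deriv (by ring)
      simpa [mul_comm, mul_assoc, mul_left_comm] using this.const_mul ((a / (2 * b)) * x)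
    exact (h0.add h2).deriv
  -- closed form of first spatial derivative
  set g : ℝ → ℝ := fun y => (2 * δ / Real.sqrt b) * (Real.sqrt y)⁻¹
      + (a / (2 * b)) * (c2 + (a / 2) * t - Real.log y) - a / (2 * b) with hg
  have hD : ∀ y : ℝ, 0 < y → HasDerivAt (fun z => u t z) (g y) y := by
    intro y hy
    have hSy : (0:ℝ) < Real.sqrt y := Real.sqrt_pos.mpr hy
    have heq : (fun z => u t z)
        = fun z => c1 - t + (4 * δ / Real.sqrt b) * Real.sqrt z
            + (a / (2 * b)) * z * (c2 + (a / 2) * t - Real.log z) := by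
      funext z; rw [hu t z, hsqdiv z]; ring
    rw [heq]
    have hsq : HasDerivAt (fun z : ℝ => (4 * δ / Real.sqrt b) * Real.sqrt z)
        ((4 * δ / Real.sqrt b) * (1 / (2 * Real.sqrt y))) y :=
      (Real.hasDerivAt_sqrt hy.ne').const_mul _
    have hprod : HasDerivAt (fun z : ℝ => (a / (2 * b)) * z * (c2 + (a / 2) * t - Real.log z))
        ((a / (2 * b)) * (c2 + (a / 2) * t - Real.log y) - a / (2 * b)) y := by
      have hlog : HasDerivAt (fun z : ℝ => c2 + (a / 2) * t - Real.log z) (-y⁻¹) y := by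
        exact ((hasDerivAt_const y (c2 + (a / 2) * t)).sub (Real.hasDerivAt_log hy.ne')).congr_deriv (by ring)
      have := ((hasDerivAt_id y).const_mul (a / (2 * b))).mul hlog
      exact this.congr_deriv (by simp only [id]; field_simp; ring)
    have hmain := ((hasDerivAt_const y (c1 - t)).add hsq).add hprod
    exact hmain.congr_deriv (by rw [hg]; field_simp; ring)
  have hev : (fun y => deriv (fun z => u t z) y) =ᶠ[nhds x] g := by
    filter_upwards [IsOpen.mem_nhds isOpen_Ioi hx] with y hy
    exact (hD y hy).deriv
  have hSx : (0:ℝ) < Real.sqrt x := Real.sqrt_pos.mpr hx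
  have hSx2 : Real.sqrt x * Real.sqrt x = x := Real.mul_self_sqrt hx.le
  -- second derivative
  have hg' : HasDerivAt g
      ((2 * δ / Real.sqrt b) * (-(1 / (2 * Real.sqrt x)) / (Real.sqrt x * Real.sqrt x))
        + (a / (2 * b)) * (-x⁻¹)) x := by
    have hinv : HasDerivAt (fun y : ℝ => (Real.sqrt y)⁻¹)
        (-(1 / (2 * Real.sqrt x)) / (Real.sqrt x * Real.sqrt x)) x := by
      have := (Real.hasDerivAt_sqrt hx.ne').inv hSx.ne'
      exact this.congr_deriv (by rw [sq])
    have h1' := hinv.const_mul (2 * δ / Real.sqrt b)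
    have h2' : HasDerivAt (fun y : ℝ => (a / (2 * b)) * (c2 + (a / 2) * t - Real.log y))
        ((a / (2 * b)) * (-x⁻¹)) x := by
      have hlog : HasDerivAt (fun y : ℝ => c2 + (a / 2) * t - Real.log y) (-x⁻¹) x := by
        exact ((hasDerivAt_const x (c2 + (a / 2) * t)).sub (Real.hasDerivAt_log hx.ne')).congr_deriv (by ring)
      exact hlog.const_mul _
    exact ((h1'.add h2').sub (hasDerivAt_const x (a / (2 * b)))).congr_deriv (by ring)
  have h2 : deriv (fun y => deriv (fun z => u t z) y) x
      = (2 * δ / Real.sqrt b) * (-(1 / (2 * Real.sqrt x)) / (Real.sqrt x * Real.sqrt x))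
        + (a / (2 * b)) * (-x⁻¹) := by
    rw [Filter.EventuallyEq.deriv_eq hev]
    exact hg'.deriv
  rw [h1, h2]
  rcases hδ with h | h <;> subst h <;> field_simp <;>
    linear_combination (-(4*b*Real.sqrt x^6)) * hT2
      + (-(4*b^2*(Real.sqrt x^4 + Real.sqrt x^2*x + x^2))) * hSx2
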